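/- Let C be a tensor category over an algebraically closed field k and let V, W, X, Y be objects of C. Then the linear map Hom(V, W) ⊗_k Hom(X, Y) → Hom(V ⊗ X, W ⊗ Y) induced by the tensor product of morphisms is injective. -/

import Mathlib

open CategoryTheory CategoryTheory.MonoidalCategory CategoryTheory.Limits TensorProduct

variable {k : Type*} [Field k]
variable {C : Type*} [Category C] [Abelian C] [Linear k C]
  [MonoidalCategory C] [MonoidalPreadditive C] [MonoidalLinear k C]

/-- The `k`-linear map `Hom(V, W) ⊗[k] Hom(X, Y) → Hom(V ⊗ X, W ⊗ Y)` induced by the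
tensor product of morphisms. -/
noncomputable def homTensorHom (V W X Y : C) :
    (V ⟶ W) ⊗[k] (X ⟶ Y) →ₗ[k] (V ⊗ X ⟶ W ⊗ Y) :=
  TensorProduct.lift <| LinearMap.mk₂ k (fun f g => f ⊗ₘ g)
    (fun f f' g => by simp [MonoidalPreadditive.add_tensor])
    (fun a f g => by simp [MonoidalCategory.tensorHom_def])
    (fun f g g' => by simp [MonoidalPreadditive.tensor_add])
    (fun a f g => by simp [MonoidalCategory.tensorHom_def])

section Aux

lemma aux_mono_whiskerLeft [RigidCategory C] (A : C) {P Q : C} (g : P ⟶ Q) [Mono g] :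
    Mono (A ◁ g) := by
  haveI := Functor.preservesMonomorphisms_of_adjunction (tensorLeftAdjunction A (Aᘁ))
  have : (tensorLeft A).map g = A ◁ g := rfl
  rw [← this]
  infer_instance

lemma aux_mono_whiskerRight [RigidCategory C] (A : C) {P Q : C} (g : P ⟶ Q) [Mono g] :
    Mono (g ▷ A) := by
  haveI := Functor.preservesMonomorphisms_of_adjunction (tensorRightAdjunction (ᘁA) A)
  have : (tensorRight A).map g = g ▷ A := rfl
  rw [← this]
  infer_instance

/-- A `(a • f) ⊗ₘ g = a • (f ⊗ₘ g)` helper. -/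
lemma aux_smul_tensor {V W X Y : C} (a : k) (f : V ⟶ W) (g : X ⟶ Y) :
    (a • f) ⊗ₘ g = a • (f ⊗ₘ g) := by
  simp [MonoidalCategory.tensorHom_def]

lemma aux_tensor_smul {V W X Y : C} (a : k) (f : V ⟶ W) (g : X ⟶ Y) :
    f ⊗ₘ (a • g) = a • (f ⊗ₘ g) := by
  simp [MonoidalCategory.tensorHom_def]

/-- The key lemma in the unit case: if `∑ uᵢ ⊗ vᵢ = 0 : 𝟙 ⊗ 𝟙 ⟶ A ⊗ B` with the `vᵢ`
linearly independent, then all `uᵢ` vanish. -/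
lemma key_unit [IsAlgClosed k] [RigidCategory C] [Simple (𝟙_ C)]
    [∀ X Y : C, FiniteDimensional k (X ⟶ Y)] :
    ∀ {n : ℕ} (A B : C) (u : Fin n → (𝟙_ C ⟶ A)) (v : Fin n → (𝟙_ C ⟶ B)),
      LinearIndependent k v → (∑ i, (u i ⊗ₘ v i)) = 0 → ∀ i, u i = 0 := by
  intro n
  induction n with
  | zero => intro A B u v _ _ i; exact i.elim0
  | succ n ih =>
    intro A B u v hv hsum
    have hvc : LinearIndependent k (v ∘ Fin.castSucc) :=
      hv.comp Fin.castSucc (Fin.castSucc_injective n)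
    by_cases h0 : u (Fin.last n) = 0
    · rw [Fin.sum_univ_castSucc, h0, MonoidalPreadditive.zero_tensor, add_zero] at hsum
      have h' := ih A B (fun i => u i.castSucc) (fun i => v i.castSucc) hvc hsum
      intro i
      refine Fin.lastCases h0 (fun j => h' j) i
    · haveI : Mono (u (Fin.last n)) := mono_of_nonzero_from_simple h0
      set uN := u (Fin.last n) with huN
      set c : A ⟶ cokernel uN := cokernel.π uN with hc
      have hcomp : ∀ i, u i ≫ c = 0 := by
        have hz : (∑ i, (u i ⊗ₘ v i)) ≫ (c ⊗ₘ 𝟙 B) = 0 := by rw [hsum]; simp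
        rw [Preadditive.sum_comp] at hz
        have he : ∀ i : Fin (n + 1), (u i ⊗ₘ v i) ≫ (c ⊗ₘ 𝟙 B) = (u i ≫ c) ⊗ₘ v i := by
          intro i; rw [MonoidalCategory.tensorHom_comp_tensorHom, Category.comp_id]
        simp only [he] at hz
        rw [Fin.sum_univ_castSucc, cokernel.condition, MonoidalPreadditive.zero_tensor,
          add_zero] at hz
        have h' := ih (cokernel uN) B (fun i => u i.castSucc ≫ c) (fun i => v i.castSucc) hvc hz
        intro i
        refine Fin.lastCases ?_ (fun j => h' j) i
        exact cokernel.condition uN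
      have hfac : ∀ i, ∃ a : k, u i = a • uN := by
        intro i
        set w : 𝟙_ C ⟶ Abelian.image uN := kernel.lift c (u i) (hcomp i) with hw
        haveI : IsIso (Abelian.factorThruImage uN) := isIso_of_mono_of_epi _
        obtain ⟨a, ha⟩ := endomorphism_simple_eq_smul_id k
          (w ≫ inv (Abelian.factorThruImage uN))
        refine ⟨a, ?_⟩
        have h1 : (w ≫ inv (Abelian.factorThruImage uN)) ≫ uN = u i := by
          have h2 : (w ≫ inv (Abelian.factorThruImage uN)) ≫
              (Abelian.factorThruImage uN ≫ Abelian.image.ι uN) = u i := by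
            rw [Category.assoc, IsIso.inv_hom_id_assoc]
            exact kernel.lift_ι _ _ _
          rw [Abelian.image.fac] at h2
          exact h2
        rw [← ha, Linear.smul_comp, Category.id_comp] at h1
        exact h1.symm
      choose a ha using hfac
      have halast : a (Fin.last n) = 1 := by
        have h2 : (a (Fin.last n) - 1) • uN = 0 := by
          rw [sub_smul, one_smul, ← ha (Fin.last n), ← huN, sub_self]
        rcases smul_eq_zero.mp h2 with h | h
        · exact sub_eq_zero.mp h
        · exact absurd h h0
      set g : 𝟙_ C ⟶ B := ∑ i, a i • v i with hgdef
      have hg : g ≠ 0 := by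
        intro hgz
        have := Fintype.linearIndependent_iff.mp hv a (by rw [← hgdef, hgz])
        rw [this (Fin.last n)] at halast
        exact zero_ne_one halast
      have hten : (uN ⊗ₘ g) = 0 := by
        rw [hgdef, tensor_sum, ← hsum]
        refine Finset.sum_congr rfl fun i _ => ?_
        rw [aux_tensor_smul, ← aux_smul_tensor, ← ha i]
      haveI hgm : Mono g := mono_of_nonzero_from_simple hg
      haveI : Mono (uN ▷ (𝟙_ C)) := aux_mono_whiskerRight (𝟙_ C) uN
      haveI : Mono (A ◁ g) := aux_mono_whiskerLeft A g
      haveI : Mono (uN ⊗ₘ g) := by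
        rw [MonoidalCategory.tensorHom_def]
        exact mono_comp _ _
      exfalso
      have hid : (𝟙 (𝟙_ C ⊗ 𝟙_ C)) = 0 := by
        have : (𝟙 (𝟙_ C ⊗ 𝟙_ C)) ≫ (uN ⊗ₘ g) = (0 : 𝟙_ C ⊗ 𝟙_ C ⟶ 𝟙_ C ⊗ 𝟙_ C) ≫ (uN ⊗ₘ g) := by
          simp [hten]
        exact (cancel_mono (uN ⊗ₘ g)).mp this
      haveI : Simple (𝟙_ C ⊗ 𝟙_ C) := Simple.of_iso (λ_ (𝟙_ C))
      exact id_nonzero _ hid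

lemma aux_exists_repr {M N : Type*} [AddCommGroup M] [Module k M] [AddCommGroup N] [Module k N]
    {m : ℕ} (b : Module.Basis (Fin m) k N) (t : M ⊗[k] N) :
    ∃ μ : Fin m → M, t = ∑ j, μ j ⊗ₜ[k] b j := by
  induction t with
  | zero => exact ⟨0, by simp⟩
  | tmul x y =>
    refine ⟨fun j => b.repr y j • x, ?_⟩
    have h3 : ∑ j, (b.repr y j • x) ⊗ₜ[k] b j = x ⊗ₜ[k] ∑ j, b.repr y j • b j := by
      rw [tmul_sum]
      exact Finset.sum_congr rfl fun j _ => smul_tmul _ _ _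
    rw [h3, b.sum_repr]
  | add s₁ s₂ h₁ h₂ =>
    obtain ⟨μ₁, rfl⟩ := h₁
    obtain ⟨μ₂, rfl⟩ := h₂
    exact ⟨μ₁ + μ₂, by simp [add_tmul, Finset.sum_add_distrib]⟩

end Aux

set_option maxHeartbeats 1600000 in
/-- In a tensor category over an algebraically closed field `k`, the
linear map `Hom(V, W) ⊗[k] Hom(X, Y) → Hom(V ⊗ X, W ⊗ Y)` induced by the tensor product
of morphisms is injective. -/
theorem homTensorHom_injective
    [IsAlgClosed k] [RigidCategory C] [Simple (𝟙_ C)]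
    [∀ X : C, IsNoetherianObject X] [∀ X : C, IsArtinianObject X]
    [∀ X Y : C, FiniteDimensional k (X ⟶ Y)]
    (V W X Y : C) :
    Function.Injective (homTensorHom (k := k) V W X Y) := by
  -- the linear map `β : Hom(X, Y) → Hom(𝟙, Y ⊗ Xᘁ)`
  let β : (X ⟶ Y) →ₗ[k] (𝟙_ C ⟶ Y ⊗ Xᘁ) :=
    { toFun := fun s => η_ X (Xᘁ) ≫ s ▷ (Xᘁ)
      map_add' := by intros; simp
      map_smul' := by intros; simp }
  have hβ : LinearMap.ker β = ⊥ := by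
    rw [LinearMap.ker_eq_bot']
    intro s hs
    have h1 := tensorRightHomEquiv_symm_coevaluation_comp_whiskerRight (Y' := Xᘁ) s
    have hβs : β s = η_ X (Xᘁ) ≫ s ▷ (Xᘁ) := rfl
    rw [← hβs, hs] at h1
    have h0 : (tensorRightHomEquiv (𝟙_ C) X (Xᘁ) Y).symm 0 = 0 := by
      simp [tensorRightHomEquiv]
    rw [h0] at h1
    rw [← cancel_epi (λ_ X).hom, ← h1, Limits.comp_zero]
  -- injectivity of `α : Hom(V, W) → Hom(𝟙, ᘁV ⊗ W)`
  have hα : ∀ s : V ⟶ W, (η_ (ᘁV) V ≫ (ᘁV) ◁ s) = 0 → s = 0 := by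
    intro s hs
    have h1 := tensorLeftHomEquiv_symm_coevaluation_comp_whiskerLeft (Y := ᘁV) s
    rw [hs] at h1
    have h0 : (tensorLeftHomEquiv (𝟙_ C) (ᘁV) V W).symm 0 = 0 := by
      simp [tensorLeftHomEquiv]
    rw [h0] at h1
    rw [← cancel_epi (ρ_ V).hom, ← h1, Limits.comp_zero]
  -- the linear map `Φ : Hom(V ⊗ X, W ⊗ Y) → Hom(𝟙 ⊗ 𝟙, (ᘁV ⊗ W) ⊗ (Y ⊗ Xᘁ))`
  let Φ : (V ⊗ X ⟶ W ⊗ Y) →ₗ[k] (((𝟙_ C ⊗ 𝟙_ C : C)) ⟶ (((ᘁV) ⊗ W) ⊗ (Y ⊗ (Xᘁ)) : C)) :=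
    { toFun := fun h =>
        (η_ (ᘁV) V ⊗ₘ η_ X (Xᘁ)) ≫ (α_ (ᘁV) V (X ⊗ Xᘁ)).hom ≫
          ((ᘁV) ◁ ((α_ V X (Xᘁ)).inv ≫ h ▷ (Xᘁ) ≫ (α_ W Y (Xᘁ)).hom)) ≫
          (α_ (ᘁV) W (Y ⊗ Xᘁ)).inv
      map_add' := by intros; simp
      map_smul' := by intros; simp }
  -- the key compatibility: `Φ (f ⊗ g) = α f ⊗ β g`
  have hΦ : ∀ (f : V ⟶ W) (s : X ⟶ Y),
      Φ (f ⊗ₘ s) = (η_ (ᘁV) V ≫ (ᘁV) ◁ f) ⊗ₘ (η_ X (Xᘁ) ≫ s ▷ (Xᘁ)) := by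
    intro f s
    simp only [Φ, LinearMap.coe_mk, AddHom.coe_mk]
    rw [← MonoidalCategory.tensorHom_comp_tensorHom]
    congr 1
    simp only [MonoidalCategory.tensorHom_def]
    monoidal
  -- main argument
  have key : ∀ {n : ℕ} (f : Fin n → (V ⟶ W)) (g : Fin n → (X ⟶ Y)),
      LinearIndependent k g → (∑ i, (f i ⊗ₘ g i)) = 0 → ∀ i, f i = 0 := by
    intro n f g hg hsum i
    have hvg : LinearIndependent k (⇑β ∘ g) := hg.map' β hβ
    let D : C := ᘁV
    have hz : ∑ j, ((η_ D V ≫ D ◁ f j) ⊗ₘ ((⇑β ∘ g) j)) = 0 := by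
      have h1 : ∀ j : Fin n, (η_ D V ≫ D ◁ f j) ⊗ₘ ((⇑β ∘ g) j) = Φ (f j ⊗ₘ g j) := by
        intro j; exact (hΦ (f j) (g j)).symm
      rw [Finset.sum_congr rfl fun j _ => h1 j, ← map_sum, hsum, map_zero]
    have := key_unit (D ⊗ W) (Y ⊗ Xᘁ) (fun j => η_ D V ≫ D ◁ f j) (⇑β ∘ g) hvg hz
    exact hα (f i) (this i)
  -- reduce injectivity to the kernel being trivial
  have hker : ∀ t : (V ⟶ W) ⊗[k] (X ⟶ Y), homTensorHom (k := k) V W X Y t = 0 → t = 0 := by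
    intro t ht
    -- write `t` in terms of a basis of `Hom(X, Y)`
    obtain ⟨μ, rfl⟩ := aux_exists_repr (Module.finBasis k (X ⟶ Y)) t
    set b := Module.finBasis k (X ⟶ Y)
    have happ : homTensorHom (k := k) V W X Y (∑ j, μ j ⊗ₜ[k] b j) = ∑ j, (μ j ⊗ₘ b j) := by
      rw [map_sum]
      rfl
    rw [happ] at ht
    have := key μ ⇑b b.linearIndependent ht
    simp only [this]
    simp
  intro t₁ t₂ h
  have : homTensorHom (k := k) V W X Y (t₁ - t₂) = 0 := by rw [map_sub, h, sub_self]
  have := hker _ this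
  exact sub_eq_zero.mp this
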